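/- Let f : ℕ → ℕ be monotone and additive (f(a + b) = f(a) + f(b) for all a, b, hence f(0) = 0). For any cost structure C over alphabets α, β with costs in ℕ, let f∘C denote the cost structure obtained by composing every insert, delete, and substitution cost of C with f. Then for all lists Q over α and R over β, the Levenshtein distance with costs f∘C equals f applied to the Levenshtein distance with costs C: levenshtein (f∘C) Q R = f (levenshtein C Q R). -/

import Mathlib

namespace Levenshtein

/-- A cost structure for edit distance (removed from Mathlib; restored with its old meaning). -/
structure Cost (α β δ : Type*) where
  delete : α → δ
  insert : β → δ
  substitute : α → β → δ

/-- Helper for `suffixLevenshtein` (as in the removed Mathlib file). -/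
def impl {α β δ : Type*} [AddZeroClass δ] [Min δ] (C : Cost α β δ)
    (xs : List α) (y : β) (d : {r : List δ // 0 < r.length}) : {r : List δ // 0 < r.length} :=
  let ⟨ds, w⟩ := d
  xs.zip (ds.zip ds.tail) |>.foldr
    (init := ⟨[C.insert y + ds.getLast (List.ne_nil_of_length_pos w)], by simp⟩)
    (fun ⟨x, d₀, d₁⟩ ⟨r, w⟩ =>
      ⟨min (C.delete x + r[0]) (min (C.insert y + d₀) (C.substitute x y + d₁)) :: r, by simp⟩)

end Levenshtein

/-- `suffixLevenshtein C xs ys` computes the Levenshtein distance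
(using the cost functions provided by `C`)
between each suffix of the list `xs` and the list `ys`. -/
def suffixLevenshtein {α β δ : Type*} [AddZeroClass δ] [Min δ] (C : Levenshtein.Cost α β δ)
    (xs : List α) (ys : List β) : {r : List δ // 0 < r.length} :=
  ys.foldr
    (Levenshtein.impl C xs)
    (xs.foldr (init := ⟨[0], by simp⟩) (fun a ⟨r, w⟩ => ⟨(C.delete a + r[0]) :: r, by simp⟩))

/-- `levenshtein C xs ys` computes the Levenshtein distance
(using the cost functions provided by `C`) between the lists `xs` and `ys`. -/
def levenshtein {α β δ : Type*} [AddZeroClass δ] [Min δ] (C : Levenshtein.Cost α β δ)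
    (xs : List α) (ys : List β) : δ :=
  let ⟨r, _⟩ := suffixLevenshtein C xs ys
  r[0]

/-- The cost structure obtained by composing every insert, delete, and substitution
cost of `C` with the function `f`. -/
def Levenshtein.Cost.comp {α β : Type*} (f : ℕ → ℕ) (C : Levenshtein.Cost α β ℕ) :
    Levenshtein.Cost α β ℕ where
  delete a := f (C.delete a)
  insert b := f (C.insert b)
  substitute a b := f (C.substitute a b)

section LevHelpers

theorem levenshtein_eq_headD {α β : Type*} (C : Levenshtein.Cost α β ℕ) (xs : List α) (ys : List β) :
    levenshtein C xs ys = (suffixLevenshtein C xs ys).1.headD 0 := by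
  unfold levenshtein
  rcases suffixLevenshtein C xs ys with ⟨_ | ⟨a, r⟩, h⟩
  · simp at h
  · rfl

theorem lev_getElem_zero (l : List ℕ) (h : 0 < l.length) : l[0] = l.headD 0 := by
  cases l with
  | nil => simp at h
  | cons a t => rfl

theorem lev_exists_cons {α β : Type*} (C : Levenshtein.Cost α β ℕ) (xs : List α) (ys : List β) :
    ∃ b t, (suffixLevenshtein C xs ys).1 = b :: t := by
  cases h : (suffixLevenshtein C xs ys).1 with
  | nil => have := (suffixLevenshtein C xs ys).2; simp [h] at this
  | cons b t => exact ⟨b, t, rfl⟩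

theorem lev_impl_nil {α β : Type*} (C : Levenshtein.Cost α β ℕ) (y : β)
    (d : {r : List ℕ // 0 < r.length}) :
    (Levenshtein.impl C [] y d).1 = [C.insert y + d.1.getLast (List.ne_nil_of_length_pos d.2)] := by
  rcases d with ⟨r, w⟩
  rfl

theorem lev_impl_cons {α β : Type*} (C : Levenshtein.Cost α β ℕ) (x : α) (xs : List α) (y : β)
    (a b : ℕ) (t : List ℕ) (w : 0 < (a :: b :: t).length) (w' : 0 < (b :: t).length) :
    (Levenshtein.impl C (x :: xs) y ⟨a :: b :: t, w⟩).1 =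
      min (C.delete x + (Levenshtein.impl C xs y ⟨b :: t, w'⟩).1.headD 0)
        (min (C.insert y + a) (C.substitute x y + b)) :: (Levenshtein.impl C xs y ⟨b :: t, w'⟩).1 := by
  have key : (Levenshtein.impl C (x :: xs) y ⟨a :: b :: t, w⟩).1 =
      (match Levenshtein.impl C xs y ⟨b :: t, w'⟩ with
        | ⟨r, w⟩ => (⟨min (C.delete x + r[0]) (min (C.insert y + a) (C.substitute x y + b)) :: r,
            by simp⟩ : {r : List ℕ // 0 < r.length})).1 := rfl
  rw [key]
  rcases Levenshtein.impl C xs y ⟨b :: t, w'⟩ with ⟨r, hr⟩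
  simp only [lev_getElem_zero]

theorem lev_suffix_cons₁ {α β : Type*} (C : Levenshtein.Cost α β ℕ) (x : α) (xs : List α) (ys : List β) :
    (suffixLevenshtein C (x :: xs) ys).1 = levenshtein C (x :: xs) ys :: (suffixLevenshtein C xs ys).1 := by
  suffices h : ∃ a, (suffixLevenshtein C (x :: xs) ys).1 = a :: (suffixLevenshtein C xs ys).1 by
    obtain ⟨a, ha⟩ := h
    rw [levenshtein_eq_headD, ha]; rfl
  induction ys with
  | nil =>
    have key : (suffixLevenshtein C (x :: xs) []).1 =
        (match suffixLevenshtein C xs [] with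
          | ⟨r, w⟩ => (⟨(C.delete x + r[0]) :: r, by simp⟩ : {r : List ℕ // 0 < r.length})).1 := rfl
    rw [key]
    rcases suffixLevenshtein C xs [] with ⟨r, hr⟩
    exact ⟨_, rfl⟩
  | cons y ys ih =>
    obtain ⟨a, ha⟩ := ih
    obtain ⟨b, t, hbt⟩ := lev_exists_cons C xs ys
    have e1 : suffixLevenshtein C (x :: xs) ys = ⟨a :: b :: t, by simp⟩ := Subtype.ext (by rw [ha, hbt])
    have e2 : suffixLevenshtein C xs ys = ⟨b :: t, by simp⟩ := Subtype.ext hbt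
    show ∃ a, (Levenshtein.impl C (x :: xs) y (suffixLevenshtein C (x :: xs) ys)).1 =
      a :: (Levenshtein.impl C xs y (suffixLevenshtein C xs ys)).1
    rw [e1, e2, lev_impl_cons (w' := by simp)]
    exact ⟨_, rfl⟩

@[simp] theorem levenshtein_nil_nil {α β : Type*} (C : Levenshtein.Cost α β ℕ) :
    levenshtein C ([] : List α) ([] : List β) = 0 := rfl

theorem levenshtein_nil_cons {α β : Type*} (C : Levenshtein.Cost α β ℕ) (y : β) (ys : List β) :
    levenshtein C ([] : List α) (y :: ys) = C.insert y + levenshtein C [] ys := by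
  rw [levenshtein_eq_headD]
  show (Levenshtein.impl C [] y (suffixLevenshtein C [] ys)).1.headD 0 = _
  rw [lev_impl_nil]
  have hl : (suffixLevenshtein C ([] : List α) ys).1.length = 1 := by
    induction ys with
    | nil => rfl
    | cons y' ys' _ =>
      show (Levenshtein.impl C [] y' (suffixLevenshtein C [] ys')).1.length = 1
      rw [lev_impl_nil]; rfl
  rw [levenshtein_eq_headD]
  generalize (List.ne_nil_of_length_pos (suffixLevenshtein C ([] : List α) ys).2) = hne
  revert hne hl
  rcases suffixLevenshtein C ([] : List α) ys with ⟨r, hr⟩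
  intro hl hne
  rcases r with _ | ⟨c, _ | ⟨d, r⟩⟩
  · simp at hl
  · rfl
  · simp at hl

theorem levenshtein_cons_nil {α β : Type*} (C : Levenshtein.Cost α β ℕ) (x : α) (xs : List α) :
    levenshtein C (x :: xs) ([] : List β) = C.delete x + levenshtein C xs [] := by
  rw [levenshtein_eq_headD, levenshtein_eq_headD (xs := xs)]
  have key : (suffixLevenshtein C (x :: xs) ([] : List β)).1 =
      (match suffixLevenshtein C xs ([] : List β) with
        | ⟨r, w⟩ => (⟨(C.delete x + r[0]) :: r, by simp⟩ : {r : List ℕ // 0 < r.length})).1 := rfl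
  rw [key]
  rcases suffixLevenshtein C xs ([] : List β) with ⟨r, hr⟩
  simp only [lev_getElem_zero]; rfl

theorem levenshtein_cons_cons {α β : Type*} (C : Levenshtein.Cost α β ℕ) (x : α) (xs : List α)
    (y : β) (ys : List β) :
    levenshtein C (x :: xs) (y :: ys) =
      min (C.delete x + levenshtein C xs (y :: ys))
        (min (C.insert y + levenshtein C (x :: xs) ys)
          (C.substitute x y + levenshtein C xs ys)) := by
  obtain ⟨b, t, hbt⟩ := lev_exists_cons C xs ys
  have hb : levenshtein C xs ys = b := by rw [levenshtein_eq_headD, hbt]; rfl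
  have e1 : suffixLevenshtein C (x :: xs) ys = ⟨levenshtein C (x :: xs) ys :: b :: t, by simp⟩ :=
    Subtype.ext (by rw [lev_suffix_cons₁, hbt])
  have e2 : suffixLevenshtein C xs ys = ⟨b :: t, by simp⟩ := Subtype.ext hbt
  have h3 : levenshtein C xs (y :: ys) = (Levenshtein.impl C xs y ⟨b :: t, by simp⟩).1.headD 0 := by
    rw [levenshtein_eq_headD, ← e2]; rfl
  rw [levenshtein_eq_headD (xs := x :: xs)]
  show (Levenshtein.impl C (x :: xs) y (suffixLevenshtein C (x :: xs) ys)).1.headD 0 = _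
  rw [e1, lev_impl_cons (w' := by simp), h3, hb]
  rfl

end LevHelpers

/-- **Monotone additive functions commute with the edit-distance recursion.**
If `f : ℕ → ℕ` is monotone and additive (`f (a + b) = f a + f b`, hence `f 0 = 0`),
then for every cost structure `C` and all lists `Q`, `R`, the Levenshtein distance
with costs `f ∘ C` equals `f` of the Levenshtein distance with costs `C`. -/
theorem levenshtein_comp (f : ℕ → ℕ) (hmono : Monotone f)
    (hadd : ∀ a b : ℕ, f (a + b) = f a + f b)
    {α β : Type*} (C : Levenshtein.Cost α β ℕ) (Q : List α) (R : List β) :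
    levenshtein (Levenshtein.Cost.comp f C) Q R = f (levenshtein C Q R) := by
  have h0 : f 0 = 0 := by
    have h := hadd 0 0
    norm_num at h
    omega
  induction Q generalizing R with
  | nil =>
    induction R with
    | nil => simp [h0]
    | cons y ys ih => rw [levenshtein_nil_cons, levenshtein_nil_cons, ih, hadd]; rfl
  | cons x xs ihx =>
    induction R with
    | nil =>
      rw [levenshtein_cons_nil, levenshtein_cons_nil, ihx, hadd]; rfl
    | cons y ys ihy =>
      rw [levenshtein_cons_cons, levenshtein_cons_cons, ihx, ihy, ihx,
        hmono.map_min, hmono.map_min, hadd, hadd, hadd]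
      rfl
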